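/- arXiv:math/0512238 — 2 statements merged into one kernel-verified Lean document; each statement's English description precedes it below -/
import Mathlib

section
/- There exists a universal constant B > 0 with the following property. Let n be a positive integer and let u and σ² be real numbers with 0 < σ² ≤ 1/8, n > 3u ≥ 6 and u > 4nσ². Let X₁, …, Xₙ be independent identically distributed random variables with P(Xⱼ = 1) = P(Xⱼ = −1) = σ²/2 and P(Xⱼ = 0) = 1 − σ², and set Sₙ = Σ_{j=1}^n Xⱼ. Then E Sₙ = 0, Var Sₙ = nσ², and P(Sₙ ≥ u) > exp{−B·u·log(u/(nσ²))}. -/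
open MeasureTheory ProbabilityTheory Finset
open scoped ENNReal

/-- Lower bound `(n/k)^k ≤ n.choose k`. -/
lemma aux_choose_lower (n k : ℕ) (hk : 0 < k) (hkn : k ≤ n) :
    ((n : ℝ) / k) ^ k ≤ (n.choose k : ℝ) := by
  have hfac : (0 : ℝ) < (k.factorial : ℝ) := by positivity
  rw [div_pow, div_le_iff₀ (by positivity)]
  have hdesc : (n.choose k : ℝ) * (k.factorial : ℝ) = (n.descFactorial k : ℝ) := by
    rw [← Nat.cast_mul, mul_comm, ← Nat.descFactorial_eq_factorial_mul_choose]
  have h1 : (n.descFactorial k : ℝ) = ∏ i ∈ range k, ((n : ℝ) - i) := by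
    rw [Nat.descFactorial_eq_prod_range, Nat.cast_prod]
    refine prod_congr rfl fun i hi => ?_
    have : i ≤ n := le_trans (le_of_lt (mem_range.1 hi)) hkn
    push_cast [this]; ring
  have h2 : (k.factorial : ℝ) = ∏ i ∈ range k, ((k : ℝ) - i) := by
    rw [← Nat.descFactorial_self, Nat.descFactorial_eq_prod_range, Nat.cast_prod]
    refine prod_congr rfl fun i hi => ?_
    have : i ≤ k := le_of_lt (mem_range.1 hi)
    push_cast [this]; ring
  have key : ∏ i ∈ range k, ((n : ℝ) * ((k : ℝ) - i)) ≤
      ∏ i ∈ range k, (((n : ℝ) - i) * k) := by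
    refine prod_le_prod (fun i hi => ?_) (fun i hi => ?_)
    · have hik : (i : ℝ) < k := by exact_mod_cast mem_range.1 hi
      have : (0:ℝ) ≤ n := Nat.cast_nonneg n
      nlinarith
    · have hik : (i : ℝ) < k := by exact_mod_cast mem_range.1 hi
      have hkn' : (k : ℝ) ≤ n := by exact_mod_cast hkn
      have hi0 : (0:ℝ) ≤ i := Nat.cast_nonneg i
      nlinarith
  rw [prod_mul_distrib, prod_mul_distrib, prod_const, prod_const, card_range,
    ← h2, ← h1, ← hdesc] at key
  exact le_of_mul_le_mul_right (by nlinarith [key]) hfac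

set_option maxHeartbeats 1000000 in
lemma aux_real_ineq (n : ℕ) (u v : ℝ) (hv : 0 < v) (hv8 : v ≤ 1/8)
    (hn : (n:ℝ) > 3*u) (hu6 : 3*u ≥ 6) (huv : u > 4*n*v) :
    Real.exp (-4 * u * Real.log (u/(n*v))) <
      (n.choose ⌈u⌉₊ : ℝ) * ((v/2)^⌈u⌉₊ * (1-v)^(n - ⌈u⌉₊)) := by
  set k := ⌈u⌉₊ with hkdef
  have hu2 : (2:ℝ) ≤ u := by linarith
  have hn0 : (0:ℝ) < n := by linarith
  have hnv : (0:ℝ) < n*v := by positivity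
  have hr : 4 < u/(n*v) := by rw [lt_div_iff₀ hnv]; linarith
  set L := Real.log (u/(n*v)) with hLdef
  have hL1 : 1 < L := by
    rw [hLdef, ← Real.log_exp 1]
    apply Real.log_lt_log (Real.exp_pos 1)
    calc Real.exp 1 < 2.7182818286 := Real.exp_one_lt_d9
      _ < 4 := by norm_num
      _ < u/(n*v) := hr
  have hku : u ≤ (k:ℝ) := Nat.le_ceil u
  have hk1 : (k:ℝ) ≤ u + 1 := (Nat.ceil_lt_add_one (by linarith)).le
  have hk0 : 0 < k := Nat.ceil_pos.2 (by linarith)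
  have hkn : k ≤ n := by
    have : (k:ℝ) < n := by linarith
    exact_mod_cast this.le
  have hchoose := aux_choose_lower n k hk0 hkn
  have hk0' : (0:ℝ) < k := by exact_mod_cast hk0
  have hv1 : (0:ℝ) < 1 - v := by linarith
  -- reduce to the (n/k)^k bound
  have step1 : ((n:ℝ)*v/(2*k))^k * (1-v)^(n-k) ≤
      (n.choose k : ℝ) * ((v/2)^k * (1-v)^(n-k)) := by
    have h1 : ((n:ℝ)*v/(2*k))^k = ((n:ℝ)/k)^k * (v/2)^k := by
      rw [← mul_pow]; congr 1; field_simp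
    rw [h1, mul_assoc]
    refine mul_le_mul_of_nonneg_right hchoose (by positivity)
  refine lt_of_lt_of_le ?_ step1
  -- exponential form
  have hA : (0:ℝ) < (n:ℝ)*v/(2*k) := by positivity
  have e1 : ((n:ℝ)*v/(2*k))^k = Real.exp (k * Real.log ((n:ℝ)*v/(2*k))) := by
    rw [← Real.log_pow, Real.exp_log (pow_pos hA k)]
  have e2 : (1-v)^(n-k) = Real.exp ((n-k : ℕ) * Real.log (1-v)) := by
    rw [← Real.log_pow, Real.exp_log (pow_pos hv1 _)]
  rw [e1, e2, ← Real.exp_add, Real.exp_lt_exp]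
  set M := Real.log (2*k/((n:ℝ)*v)) with hMdef
  have hlogA : Real.log ((n:ℝ)*v/(2*k)) = -M := by
    rw [hMdef, ← Real.log_inv]; congr 1; field_simp
  have hM0 : 0 < M := by
    apply Real.log_pos
    rw [lt_div_iff₀ hnv]; nlinarith
  have hr' : 4*((n:ℝ)*v) < u := (lt_div_iff₀ hnv).1 hr
  have hM2 : M < 2*L := by
    have h4 : 2*(k:ℝ)/((n:ℝ)*v) < (u/(n*v))^2 := by
      have e : (u/((n:ℝ)*v))^2 = u*u/(((n:ℝ)*v)*((n:ℝ)*v)) := by ring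
      rw [e, div_lt_div_iff₀ hnv (by positivity)]
      have hk3 : 2*(k:ℝ) ≤ 3*u := by linarith
      have h5 : 2*(k:ℝ)*((n:ℝ)*v) ≤ 3*u*((n:ℝ)*v) := by nlinarith
      have hu0 : (0:ℝ) < u := by linarith
      have h6 : 3*u*((n:ℝ)*v) < u*u := by nlinarith [mul_lt_mul_of_pos_left hr' hu0]
      nlinarith [h5, h6, hnv]
    calc M < Real.log ((u/(n*v))^2) := Real.log_lt_log (by positivity) h4
      _ = 2*L := by rw [Real.log_pow]; push_cast; ring
  have b1 : (k:ℝ) * M < 3*u*L := by nlinarith [hM2, hM0, hk1, hu2, hL1]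
  have hlog1v : -Real.log (1-v) ≤ v/(1-v) := by
    have := Real.log_le_sub_one_of_pos (x := (1-v)⁻¹) (by positivity)
    rw [Real.log_inv] at this
    have h2 : (1-v)⁻¹ - 1 = v/(1-v) := by field_simp; ring
    linarith [h2 ▸ this]
  have hlog1v0 : 0 ≤ -Real.log (1-v) := by
    have := Real.log_nonpos (by linarith) (by linarith : (1:ℝ)-v ≤ 1)
    linarith
  have hnk : ((n-k : ℕ):ℝ) ≤ n := by
    have : n - k ≤ n := Nat.sub_le n k
    exact_mod_cast this
  have hnk0 : (0:ℝ) ≤ ((n-k : ℕ):ℝ) := Nat.cast_nonneg _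
  have hvdiv : v/(1-v) ≤ 8*v/7 := by
    rw [div_le_div_iff₀ hv1 (by norm_num)]; nlinarith
  have b2 : ((n-k : ℕ):ℝ) * (-Real.log (1-v)) < u*L := by
    have h7 : -Real.log (1-v) ≤ 8*v/7 := hlog1v.trans hvdiv
    have c1 : ((n-k : ℕ):ℝ) * (-Real.log (1-v)) ≤ (n:ℝ) * (8*v/7) :=
      mul_le_mul hnk h7 hlog1v0 hn0.le
    have c2 : (n:ℝ) * (8*v/7) < u := by nlinarith
    nlinarith [c1, c2, hL1, hu2]
  have goal : (k:ℝ) * M + ((n-k : ℕ):ℝ) * (-Real.log (1-v)) < 4*u*L := by linarith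
  rw [hlogA]
  linarith [goal]

lemma aux_integrable_dirac (f : ℝ → ℝ) (a : ℝ) : Integrable f (Measure.dirac a) :=
  (integrable_const (f a)).congr (MeasureTheory.ae_eq_dirac f).symm

set_option maxHeartbeats 2000000 in
/-- Sharpness of Bennett-type bounds: lower bound for the tail of sums of iid
three-valued random variables. -/
theorem tail_lower_bound_three_valued :
    ∃ B : ℝ, 0 < B ∧
      ∀ (n : ℕ) (u v : ℝ), 0 < v → v ≤ 1 / 8 → (n : ℝ) > 3 * u → 3 * u ≥ 6 →
        u > 4 * n * v →
      ∀ (Ω : Type) (_ : MeasurableSpace Ω) (P : Measure Ω), IsProbabilityMeasure P →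
      ∀ X : Fin n → Ω → ℝ,
        iIndepFun X P →
        (∀ j, Measure.map (X j) P =
            ENNReal.ofReal (v / 2) • Measure.dirac (1 : ℝ) +
            ENNReal.ofReal (v / 2) • Measure.dirac (-1 : ℝ) +
            ENNReal.ofReal (1 - v) • Measure.dirac (0 : ℝ)) →
        (∫ ω, (∑ j, X j ω) ∂P) = 0 ∧
        variance (fun ω => ∑ j, X j ω) P = n * v ∧
        P {ω | (∑ j, X j ω) ≥ u} >
          ENNReal.ofReal (Real.exp (-B * u * Real.log (u / (n * v)))) := by
  classical
  refine ⟨4, by norm_num, ?_⟩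
  intro n u v hv hv8 hn hu6 huv Ω mΩ P hP X hIndep hmap
  set ν : Measure ℝ := ENNReal.ofReal (v / 2) • Measure.dirac (1 : ℝ) +
        ENNReal.ofReal (v / 2) • Measure.dirac (-1 : ℝ) +
        ENNReal.ofReal (1 - v) • Measure.dirac (0 : ℝ) with hν
  have hv1 : (0:ℝ) < 1 - v := by linarith
  -- AEMeasurability
  have hXae : ∀ j, AEMeasurable (X j) P := by
    intro j
    by_contra h
    have h0 : Measure.map (X j) P = 0 := Measure.map_of_not_aemeasurable h
    rw [hmap j] at h0
    have h1 : ν ({0} : Set ℝ) = 0 := by rw [h0]; rfl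
    rw [hν] at h1
    simp [Measure.add_apply, Measure.smul_apply, Measure.dirac_apply, smul_eq_mul,
      Set.indicator] at h1
    linarith
  -- a.e. boundedness
  have hbound : ∀ j, ∀ᵐ ω ∂P, ‖X j ω‖ ≤ 1 := by
    intro j
    have hms : MeasurableSet ({-1, 0, 1} : Set ℝ) := by measurability
    have h0 : P (X j ⁻¹' ({-1, 0, 1} : Set ℝ)ᶜ) = 0 := by
      rw [← Measure.map_apply_of_aemeasurable (hXae j) hms.compl, hmap j, hν]
      simp [Measure.add_apply, Measure.smul_apply, Measure.dirac_apply, smul_eq_mul,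
        Set.indicator]
    rw [ae_iff]
    refine measure_mono_null (fun ω hω => ?_) h0
    simp only [Set.mem_setOf_eq, not_le, Real.norm_eq_abs] at hω
    simp only [Set.mem_preimage, Set.mem_compl_iff, Set.mem_insert_iff, Set.mem_singleton_iff]
    push_neg
    refine ⟨?_, ?_, ?_⟩ <;> intro h <;> rw [h] at hω <;> norm_num at hω
  have hMem : ∀ j, MemLp (X j) 2 P :=
    fun j => MemLp.of_bound (hXae j).aestronglyMeasurable 1 (hbound j)
  have hInt : ∀ j, Integrable (X j) P := fun j => (hMem j).integrable one_le_two
  have hIdirac : ∀ (f : ℝ → ℝ), Integrable f ν := by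
    intro f
    have I : ∀ (a : ℝ) (c : ℝ), Integrable f (ENNReal.ofReal c • Measure.dirac a) :=
      fun a c => (aux_integrable_dirac f a).smul_measure ENNReal.ofReal_ne_top
    rw [hν]
    exact ((I 1 _).add_measure (I (-1) _)).add_measure (I 0 _)
  have hnuint : ∀ (f : ℝ → ℝ), ∫ x, f x ∂ν = (v/2) * f 1 + (v/2) * f (-1) + (1-v) * f 0 := by
    intro f
    have I : ∀ (a : ℝ) (c : ℝ), Integrable f (ENNReal.ofReal c • Measure.dirac a) :=
      fun a c => (aux_integrable_dirac f a).smul_measure ENNReal.ofReal_ne_top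
    rw [hν, integral_add_measure ((I 1 _).add_measure (I (-1) _)) (I 0 _),
      integral_add_measure (I 1 _) (I (-1) _)]
    simp only [integral_smul_measure, integral_dirac,
      ENNReal.toReal_ofReal (by linarith : (0:ℝ) ≤ v/2),
      ENNReal.toReal_ofReal (by linarith : (0:ℝ) ≤ 1-v), smul_eq_mul]
  have hEX : ∀ j, ∫ ω, X j ω ∂P = 0 := by
    intro j
    have h1 : ∫ ω, X j ω ∂P = ∫ x, x ∂(Measure.map (X j) P) :=
      (integral_map (hXae j) aestronglyMeasurable_id).symm
    rw [h1, hmap j, hnuint (fun x => x)]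
    ring
  have hEX2 : ∀ j, ∫ ω, (X j ω)^2 ∂P = v := by
    intro j
    have h1 : ∫ ω, (X j ω)^2 ∂P = ∫ x, x^2 ∂(Measure.map (X j) P) :=
      (integral_map (hXae j) (continuous_pow 2).aestronglyMeasurable).symm
    rw [h1, hmap j, hnuint (fun x => x^2)]
    ring
  have hVar : ∀ j, variance (X j) P = v := by
    intro j
    rw [variance_eq_sub (hMem j)]
    have h2 : ∫ ω, ((X j) ^ 2) ω ∂P = v := by
      simp only [Pi.pow_apply]; exact hEX2 j
    rw [h2, hEX j]
    ring
  -- part 1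
  have part1 : (∫ ω, (∑ j, X j ω) ∂P) = 0 := by
    rw [integral_finset_sum univ (fun j _ => hInt j)]
    simp [hEX]
  -- part 2
  have part2 : variance (fun ω => ∑ j, X j ω) P = n * v := by
    have hfun : (fun ω => ∑ j, X j ω) = ∑ j, X j := by
      funext ω; simp
    rw [hfun, IndepFun.variance_sum (fun j _ => hMem j)
      (fun i _ j _ hij => hIndep.indepFun hij)]
    simp [hVar, card_univ, nsmul_eq_mul]
  -- part 3
  classical
  set k := ⌈u⌉₊ with hkdef
  have hu2 : (2:ℝ) ≤ u := by linarith
  have hku : u ≤ (k:ℝ) := Nat.le_ceil u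
  have hk1 : (k:ℝ) ≤ u + 1 := (Nat.ceil_lt_add_one (by linarith)).le
  have hk0 : 0 < k := Nat.ceil_pos.2 (by linarith)
  have hkn : k ≤ n := by
    have : (k:ℝ) < n := by linarith
    exact_mod_cast this.le
  set X' : Fin n → Ω → ℝ := fun j => (hXae j).mk (X j) with hX'def
  have hX'm : ∀ j, Measurable (X' j) := fun j => (hXae j).measurable_mk
  have hae : ∀ᵐ ω ∂P, ∀ j, X j ω = X' j ω := ae_all_iff.2 fun j => (hXae j).ae_eq_mk
  have hpre : ∀ (j : Fin n) (s : Set ℝ), MeasurableSet s → P (X j ⁻¹' s) = ν s := by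
    intro j s hs
    rw [← Measure.map_apply_of_aemeasurable (hXae j) hs, hmap j]
  have hν1 : ν ({1} : Set ℝ) = ENNReal.ofReal (v/2) := by
    rw [hν]
    simp [Measure.add_apply, Measure.smul_apply, Measure.dirac_apply, Set.indicator_apply]
    norm_num
  have hν0 : ν ({0} : Set ℝ) = ENNReal.ofReal (1-v) := by
    rw [hν]
    simp [Measure.add_apply, Measure.smul_apply, Measure.dirac_apply, Set.indicator_apply]
  set E : Finset (Fin n) → Set Ω :=
    fun T => ⋂ j, X' j ⁻¹' (if j ∈ T then ({1}:Set ℝ) else {0}) with hEdef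
  have hsmeas : ∀ (T : Finset (Fin n)) (j : Fin n),
      MeasurableSet (if j ∈ T then ({1}:Set ℝ) else {0}) := by
    intro T j; split_ifs <;> exact measurableSet_singleton _
  have hEmeas : ∀ T, MeasurableSet (E T) :=
    fun T => MeasurableSet.iInter fun j => (hX'm j) (hsmeas T j)
  have hPE : ∀ T : Finset (Fin n), T.card = k → P (E T) =
      ENNReal.ofReal (v/2) ^ k * ENNReal.ofReal (1-v) ^ (n - k) := by
    intro T hT
    have h1 : E T =ᵐ[P] ⋂ j, X j ⁻¹' (if j ∈ T then ({1}:Set ℝ) else {0}) := by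
      filter_upwards [hae] with ω h
      have : (ω ∈ E T) ↔ (ω ∈ ⋂ j, X j ⁻¹' (if j ∈ T then ({1}:Set ℝ) else {0})) := by
        simp only [hEdef, Set.mem_iInter, Set.mem_preimage]
        constructor
        · intro h2 j; rw [h j]; exact h2 j
        · intro h2 j; rw [← h j]; exact h2 j
      exact eq_iff_iff.2 this
    rw [measure_congr h1, hIndep.meas_iInter (fun j => ⟨_, hsmeas T j, rfl⟩)]
    have h2 : ∀ j : Fin n, P (X j ⁻¹' (if j ∈ T then ({1}:Set ℝ) else {0})) =
        if j ∈ T then ENNReal.ofReal (v/2) else ENNReal.ofReal (1-v) := by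
      intro j; split_ifs with h
      · rw [hpre j _ (measurableSet_singleton _), hν1]
      · rw [hpre j _ (measurableSet_singleton _), hν0]
    rw [Finset.prod_congr rfl (fun j _ => h2 j), ← Finset.prod_sdiff (Finset.subset_univ T)]
    have h3 : (∏ j ∈ T, if j ∈ T then ENNReal.ofReal (v/2) else ENNReal.ofReal (1-v))
        = ENNReal.ofReal (v/2) ^ k := by
      rw [Finset.prod_congr rfl (fun j hj => if_pos hj), Finset.prod_const, hT]
    have h4 : (∏ j ∈ univ \ T, if j ∈ T then ENNReal.ofReal (v/2) else ENNReal.ofReal (1-v))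
        = ENNReal.ofReal (1-v) ^ (n - k) := by
      rw [Finset.prod_congr rfl (fun j hj => if_neg (Finset.mem_sdiff.1 hj).2),
        Finset.prod_const, Finset.card_sdiff_of_subset (Finset.subset_univ T), Finset.card_univ,
        Fintype.card_fin, hT]
    rw [h3, h4, mul_comm]
  have hdisj : Set.PairwiseDisjoint ↑(Finset.powersetCard k (univ : Finset (Fin n))) E := by
    intro T hT T' hT' hne
    rw [Finset.mem_coe, Finset.mem_powersetCard] at hT hT'
    have hsub : ¬ T ⊆ T' := fun hs2 =>
      hne (Finset.eq_of_subset_of_card_le hs2 (by rw [hT.2, hT'.2]))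
    obtain ⟨j, hjT, hjT'⟩ := Finset.not_subset.1 hsub
    refine Set.disjoint_left.2 fun ω hω hω' => ?_
    have h1 := Set.mem_iInter.1 hω j
    have h2 := Set.mem_iInter.1 hω' j
    rw [Set.mem_preimage, if_pos hjT, Set.mem_singleton_iff] at h1
    rw [Set.mem_preimage, if_neg hjT', Set.mem_singleton_iff] at h2
    rw [h1] at h2
    norm_num at h2
  have hunion : P (⋃ T ∈ Finset.powersetCard k (univ : Finset (Fin n)), E T) =
      (n.choose k : ℝ≥0∞) * (ENNReal.ofReal (v/2) ^ k * ENNReal.ofReal (1-v) ^ (n-k)) := by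
    rw [measure_biUnion_finset hdisj (fun T _ => hEmeas T),
      Finset.sum_congr rfl (fun T hT => hPE T (Finset.mem_powersetCard.1 hT).2),
      Finset.sum_const, Finset.card_powersetCard, Finset.card_univ, Fintype.card_fin,
      nsmul_eq_mul]
  have hsub2 : (⋃ T ∈ Finset.powersetCard k (univ : Finset (Fin n)), E T) ⊆
      {ω | (∑ j, X' j ω) ≥ u} := by
    intro ω hω
    simp only [Set.mem_iUnion] at hω
    obtain ⟨T, hT, hωT⟩ := hω
    rw [Finset.mem_powersetCard] at hT
    have h5 : ∀ j ∈ T, X' j ω = 1 := by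
      intro j hj
      have := Set.mem_iInter.1 hωT j
      rw [Set.mem_preimage, if_pos hj, Set.mem_singleton_iff] at this
      exact this
    have h6 : ∀ j ∈ univ \ T, X' j ω = 0 := by
      intro j hj
      have := Set.mem_iInter.1 hωT j
      rw [Set.mem_preimage, if_neg (Finset.mem_sdiff.1 hj).2, Set.mem_singleton_iff] at this
      exact this
    have hsum : ∑ j, X' j ω = k := by
      rw [← Finset.sum_sdiff (Finset.subset_univ T), Finset.sum_congr rfl h6,
        Finset.sum_congr rfl h5]
      simp [hT.2]
    show u ≤ _
    rw [hsum]
    exact hku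
  have htail : P {ω | (∑ j, X j ω) ≥ u} = P {ω | (∑ j, X' j ω) ≥ u} := by
    apply measure_congr
    filter_upwards [hae] with ω h
    have hs : (∑ j, X j ω) = ∑ j, X' j ω := Finset.sum_congr rfl fun j _ => h j
    have : (ω ∈ {ω | (∑ j, X j ω) ≥ u}) ↔ (ω ∈ {ω | (∑ j, X' j ω) ≥ u}) := by
      simp only [Set.mem_setOf_eq, hs]
    exact eq_iff_iff.2 this
  have hcpos : (0:ℝ) < (n.choose k : ℝ) := by
    exact_mod_cast Nat.choose_pos hkn
  have part3 : P {ω | (∑ j, X j ω) ≥ u} >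
      ENNReal.ofReal (Real.exp (-4 * u * Real.log (u / (n * v)))) := by
    calc ENNReal.ofReal (Real.exp (-4 * u * Real.log (u / (n*v))))
        < ENNReal.ofReal ((n.choose k : ℝ) * ((v/2)^k * (1-v)^(n-k))) := by
          rw [ENNReal.ofReal_lt_ofReal_iff (by positivity)]
          exact aux_real_ineq n u v hv hv8 hn hu6 huv
      _ = (n.choose k : ℝ≥0∞) * (ENNReal.ofReal (v/2) ^ k * ENNReal.ofReal (1-v) ^ (n-k)) := by
          rw [ENNReal.ofReal_mul (by positivity), ENNReal.ofReal_mul (by positivity),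
            ENNReal.ofReal_pow (by positivity), ENNReal.ofReal_pow (by positivity),
            ENNReal.ofReal_natCast]
      _ = P (⋃ T ∈ Finset.powersetCard k (univ : Finset (Fin n)), E T) := hunion.symm
      _ ≤ P {ω | (∑ j, X' j ω) ≥ u} := measure_mono hsub2
      _ = P {ω | (∑ j, X j ω) ≥ u} := htail.symm
  exact ⟨part1, part2, part3⟩
end

section
/- Let k ≥ 1 be an integer, let η be a standard normal random variable and let H_k denote the k-th probabilists' Hermite polynomial with leading coefficient 1. Then there exists a constant C̄ = C̄(k) > 0 such that for every σ > 0 and every u > 0, P(σ·|H_k(η)| > u) ≥ ( C̄ / ( (u/σ)^{1/k} + 1 ) ) · exp{ − (1/2)·(u/σ)^{2/k} }. -/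
open MeasureTheory ProbabilityTheory

set_option maxHeartbeats 1000000

open Polynomial Finset in
lemma hermite_lower (j : ℕ) :
    ∃ c : ℝ, 0 ≤ c ∧ ∀ x : ℝ, 1 ≤ x →
      x ^ (j+1) - c * x ^ j / x ≤ (Polynomial.aeval x (Polynomial.hermite (j+1)) : ℝ) := by
  refine ⟨∑ i ∈ range j, |((hermite (j+1)).coeff i : ℝ)|,
    Finset.sum_nonneg fun i _ => abs_nonneg _, fun x hx => ?_⟩
  have hx0 : (0:ℝ) < x := lt_of_lt_of_le one_pos hx
  have heval : (Polynomial.aeval x (Polynomial.hermite (j+1)) : ℝ)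
      = ∑ i ∈ range (j + 2), ((hermite (j+1)).coeff i : ℝ) * x ^ i := by
    rw [Polynomial.aeval_eq_sum_range (R := ℤ), natDegree_hermite]
    simp only [zsmul_eq_mul]
  have hcoeffj : (hermite (j+1)).coeff j = 0 := by
    apply coeff_hermite_of_odd_add
    exact ⟨j, by ring⟩
  rw [heval, Finset.sum_range_succ, Finset.sum_range_succ, hcoeffj,
    coeff_hermite_self]
  push_cast
  simp only [Int.cast_zero, zero_mul, add_zero, one_mul]
  have hterm : ∀ i ∈ range j, -(|((hermite (j+1)).coeff i : ℝ)| * (x ^ j / x))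
      ≤ ((hermite (j+1)).coeff i : ℝ) * x ^ i := by
    intro i hi
    have hij : i + 1 ≤ j := Finset.mem_range.mp hi
    have h1 : x ^ i * x ≤ x ^ j := by
      calc x ^ i * x = x ^ (i+1) := (pow_succ x i).symm
      _ ≤ x ^ j := pow_le_pow_right₀ hx hij
    have h2 : x ^ i ≤ x ^ j / x := (le_div_iff₀ hx0).mpr h1
    have h3 : -((hermite (j+1)).coeff i : ℝ) * x ^ i ≤ |((hermite (j+1)).coeff i : ℝ)| * (x ^ j / x) := by
      apply mul_le_mul (neg_le_abs _) h2 (pow_nonneg hx0.le i) (abs_nonneg _)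
    linarith
  have hsum := Finset.sum_le_sum hterm
  rw [Finset.sum_neg_distrib, ← Finset.sum_mul] at hsum
  rw [mul_div_assoc]
  linarith

lemma hermite_key (j : ℕ) (c a m : ℝ) (hc : 0 ≤ c) (ha : a = c * 2 ^ (j+1) + 1)
    (hm : m = max 1 (max (Real.sqrt c + 1) (Real.sqrt a))) :
    ∀ v : ℝ, m ≤ v → ∀ x : ℝ, v + a / v ≤ x →
      v ^ (j+1) < x ^ (j+1) - c * x ^ j / x := by
  have ha0 : 0 < a := by rw [ha]; positivity
  intro v hv x hx
  rw [hm] at hv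
  have hv1 : (1:ℝ) ≤ v := le_trans (le_max_left _ _) hv
  have hv0 : (0:ℝ) < v := lt_of_lt_of_le one_pos hv1
  have hva : a ≤ v^2 := by
    have : Real.sqrt a ≤ v := le_trans (le_trans (le_max_right _ _) (le_max_right _ _)) hv
    nlinarith [Real.sq_sqrt ha0.le, Real.sqrt_nonneg a]
  have hvc : c < v^2 := by
    have h1 : Real.sqrt c + 1 ≤ v := le_trans (le_trans (le_max_left _ _) (le_max_right _ _)) hv
    nlinarith [Real.sq_sqrt hc, Real.sqrt_nonneg c]
  obtain ⟨t, ht⟩ : ∃ t : ℝ, t = v + a / v := ⟨_, rfl⟩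
  rw [← ht] at hx
  have hav : 0 < a / v := by positivity
  have htv : v ≤ t := by rw [ht]; linarith
  have ht0 : 0 < t := lt_of_lt_of_le hv0 htv
  have ht2 : t ≤ 2 * v := by
    have : a / v ≤ v := (div_le_iff₀ hv0).mpr (by nlinarith)
    rw [ht]; linarith
  have hx0 : 0 < x := lt_of_lt_of_le ht0 hx
  have hct : c < t^2 := lt_of_lt_of_le hvc (by nlinarith)
  have hfid : ∀ y : ℝ, 0 < y → y ^ j * (y - c / y) = y^(j+1) - c * y^j / y := by
    intro y hy; field_simp; ring
  have hmono : t^(j+1) - c * t^j / t ≤ x^(j+1) - c * x^j / x := by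
    rw [← hfid t ht0, ← hfid x hx0]
    have h1 : t ^ j ≤ x ^ j := pow_le_pow_left₀ ht0.le hx j
    have h2 : t - c / t ≤ x - c / x := by
      have hcd : c / x ≤ c / t := by
        rw [div_le_div_iff₀ hx0 ht0]; nlinarith
      linarith
    have h3 : 0 ≤ t - c / t := by
      have : c / t ≤ t := (div_le_iff₀ ht0).mpr (by nlinarith)
      linarith
    exact mul_le_mul h1 h2 h3 (pow_nonneg hx0.le j)
  have hvj : (0:ℝ) < v^(j+1) := pow_pos hv0 _
  have hbern : v^(j+1) + ((j:ℝ)+1) * a * (v^(j+1) / v^2) ≤ t^(j+1) := by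
    have hr : (0:ℝ) ≤ a / v^2 := by positivity
    have h := one_add_mul_le_pow (a := a / v^2) (by linarith) (j+1)
    have h2 : v^(j+1) * (1 + (↑(j+1):ℝ) * (a/v^2)) ≤ v^(j+1) * (1 + a/v^2)^(j+1) :=
      mul_le_mul_of_nonneg_left h hvj.le
    have h3 : v^(j+1) * (1 + a/v^2)^(j+1) = (v * (1 + a/v^2))^(j+1) := (mul_pow _ _ _).symm
    have h4 : v * (1 + a/v^2) = t := by rw [ht]; field_simp
    have h5 : v^(j+1) * (1 + (↑(j+1):ℝ) * (a/v^2)) = v^(j+1) + ((j:ℝ)+1) * a * (v^(j+1) / v^2) := by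
      push_cast; ring
    rw [h5, h3, h4] at h2
    exact h2
  have hub : c * t^j / t ≤ c * 2^j * (v^(j+1) / v^2) := by
    have h1 : c * t^j ≤ c * (2*v)^j :=
      mul_le_mul_of_nonneg_left (pow_le_pow_left₀ ht0.le ht2 j) hc
    have h2 : c * t^j / t ≤ c * (2*v)^j / v :=
      div_le_div₀ (by positivity) h1 hv0 htv
    have h3 : c * (2*v)^j / v = c * 2^j * (v^(j+1) / v^2) := by
      field_simp; ring
    linarith
  have hcoef : (1:ℝ) ≤ ((j:ℝ)+1) * a - c * 2^j := by
    have h1 : a ≤ ((j:ℝ)+1) * a := le_mul_of_one_le_left ha0.le (by linarith [Nat.cast_nonneg (α:=ℝ) j])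
    have h2 : c * 2^j + 1 ≤ a := by
      rw [ha]
      have h2j : (2:ℝ)^(j+1) = 2 * 2^j := by ring
      nlinarith [pow_pos (zero_lt_two (α := ℝ)) j]
    linarith
  have hw : 0 < v^(j+1) / v^2 := by positivity
  have hdiff : ((j:ℝ)+1) * a * (v^(j+1) / v^2) - c * 2^j * (v^(j+1) / v^2)
      = (((j:ℝ)+1) * a - c * 2^j) * (v^(j+1) / v^2) := by ring
  have hge : (1:ℝ) * (v^(j+1) / v^2) ≤ (((j:ℝ)+1) * a - c * 2^j) * (v^(j+1) / v^2) :=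
    mul_le_mul_of_nonneg_right hcoef hw.le
  have : v^(j+1) < t^(j+1) - c * t^j / t := by
    rw [one_mul] at hge
    linarith
  linarith

lemma gaussian_icc_lower (t s : ℝ) (h0 : 0 ≤ t) (hs : 0 < s) :
    ENNReal.ofReal (s * ((Real.sqrt (2 * Real.pi))⁻¹ * Real.exp (-(t+s)^2/2)))
      ≤ gaussianReal 0 1 (Set.Icc t (t+s)) := by
  rw [gaussianReal_apply_eq_integral 0 one_ne_zero]
  apply ENNReal.ofReal_le_ofReal
  have hmeas : MeasurableSet (Set.Icc t (t+s)) := measurableSet_Icc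
  have hvol : (volume (Set.Icc t (t+s))) = ENNReal.ofReal s := by
    rw [Real.volume_Icc]; congr 1; ring
  have hpt : ∀ x ∈ Set.Icc t (t+s),
      (Real.sqrt (2 * Real.pi))⁻¹ * Real.exp (-(t+s)^2/2) ≤ gaussianPDFReal 0 1 x := by
    intro x hx
    obtain ⟨hx1, hx2⟩ := hx
    rw [gaussianPDFReal]
    simp only [NNReal.coe_one, mul_one, sub_zero]
    apply mul_le_mul_of_nonneg_left _ (inv_nonneg.mpr (Real.sqrt_nonneg _))
    apply Real.exp_le_exp.mpr
    have : x^2 ≤ (t+s)^2 := by nlinarith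
    linarith
  have key := setIntegral_ge_of_const_le (μ := volume) (f := gaussianPDFReal 0 1) hmeas
      (by rw [hvol]; exact ENNReal.ofReal_ne_top) hpt
      ((integrable_gaussianPDFReal 0 1).integrableOn)
  rw [measureReal_def, hvol, ENNReal.toReal_ofReal hs.le, smul_eq_mul] at key
  linarith

/-- Lower bound for the tail of `σ |H_k(η)|`, where `H_k` is the `k`-th
probabilists' Hermite polynomial with leading coefficient 1 and `η` is a
standard normal random variable. -/
theorem hermite_tail_lower_bound (k : ℕ) (hk : 1 ≤ k) :
    ∃ C : ℝ, 0 < C ∧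
    ∀ (Ω : Type) (_ : MeasurableSpace Ω) (P : Measure Ω), IsProbabilityMeasure P →
    ∀ η : Ω → ℝ, Measure.map η P = gaussianReal 0 1 →
    ∀ σ u : ℝ, 0 < σ → 0 < u →
      P {ω | σ * |Polynomial.aeval (η ω) (Polynomial.hermite k)| > u} ≥
        ENNReal.ofReal ((C / ((u / σ) ^ ((1 : ℝ) / k) + 1)) *
          Real.exp (-(1 / 2) * (u / σ) ^ ((2 : ℝ) / k))) := by
  obtain ⟨j, rfl⟩ : ∃ j, k = j + 1 := ⟨k - 1, by omega⟩
  obtain ⟨c, hc, hA⟩ := hermite_lower j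
  obtain ⟨a, ha⟩ : ∃ a : ℝ, a = c * 2 ^ (j+1) + 1 := ⟨_, rfl⟩
  obtain ⟨m, hm⟩ : ∃ m : ℝ, m = max 1 (max (Real.sqrt c + 1) (Real.sqrt a)) := ⟨_, rfl⟩
  have hkey := hermite_key j c a m hc ha hm
  have ha0 : 0 < a := by rw [ha]; positivity
  have hm1 : (1:ℝ) ≤ m := by rw [hm]; exact le_max_left _ _
  have hm0 : (0:ℝ) < m := lt_of_lt_of_le one_pos hm1
  obtain ⟨K, hK⟩ : ∃ K : ℝ,
      K = (Real.sqrt (2 * Real.pi))⁻¹ * Real.exp (-(2*(a+1) + (a/m+1)^2)/2) := ⟨_, rfl⟩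
  have hK0 : 0 < K := by
    rw [hK]
    have : (0:ℝ) < Real.sqrt (2 * Real.pi) := Real.sqrt_pos.mpr (by positivity)
    positivity
  refine ⟨(1/(m+1)) * K * Real.exp (-m^2/2), by positivity, ?_⟩
  intro Ω _ P hP η hmap σ u hσ hu
  have hus : 0 < u / σ := div_pos hu hσ
  obtain ⟨v, hv⟩ : ∃ v : ℝ, v = (u / σ) ^ ((1 : ℝ) / (j+1 : ℕ)) := ⟨_, rfl⟩
  have hv0 : 0 < v := by rw [hv]; exact Real.rpow_pos_of_pos hus _
  have hj1 : ((j:ℝ) + 1) ≠ 0 := by positivity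
  have hvk : v ^ (j+1) = u / σ := by
    rw [hv, ← Real.rpow_natCast _ (j+1), ← Real.rpow_mul hus.le]
    push_cast
    rw [one_div, inv_mul_cancel₀ hj1, Real.rpow_one]
  have hv2 : (u / σ) ^ ((2:ℝ) / (j+1 : ℕ)) = v ^ 2 := by
    rw [hv, ← Real.rpow_natCast _ 2, ← Real.rpow_mul hus.le]
    congr 1
    push_cast
    field_simp
  -- v' = max v m
  obtain ⟨v', hv'⟩ : ∃ v' : ℝ, v' = max v m := ⟨_, rfl⟩
  have hv'm : m ≤ v' := hv' ▸ le_max_right _ _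
  have hv'v : v ≤ v' := hv' ▸ le_max_left _ _
  have hv'0 : 0 < v' := lt_of_lt_of_le hm0 hv'm
  obtain ⟨t, htdef⟩ : ∃ t : ℝ, t = v' + a / v' := ⟨_, rfl⟩
  obtain ⟨s, hsdef⟩ : ∃ s : ℝ, s = 1 / (v' + 1) := ⟨_, rfl⟩
  have hs0 : 0 < s := by rw [hsdef]; positivity
  have ht0 : 0 < t := by rw [htdef]; positivity
  -- event inclusion
  have hincl : η ⁻¹' (Set.Icc t (t+s)) ⊆
      {ω | σ * |Polynomial.aeval (η ω) (Polynomial.hermite (j+1))| > u} := by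
    intro ω hω
    obtain ⟨h1, _⟩ := hω
    rw [htdef] at h1
    have hav' : 0 < a / v' := by positivity
    have hx1 : (1:ℝ) ≤ η ω := by linarith
    have hgt : v' ^ (j+1) < (Polynomial.aeval (η ω) (Polynomial.hermite (j+1)) : ℝ) :=
      lt_of_lt_of_le (hkey v' hv'm (η ω) h1) (hA (η ω) hx1)
    have hle : u / σ ≤ v' ^ (j+1) := by
      rw [← hvk]; exact pow_le_pow_left₀ hv0.le hv'v _
    have : u / σ < |Polynomial.aeval (η ω) (Polynomial.hermite (j+1))| :=
      lt_of_le_of_lt hle (lt_of_lt_of_le hgt (le_abs_self _))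
    have := (div_lt_iff₀ hσ).mp this
    simp only [Set.mem_setOf_eq, gt_iff_lt]
    linarith
  -- measurability of η
  have hηm : AEMeasurable η P := by
    by_contra h
    rw [Measure.map_of_not_aemeasurable h] at hmap
    have := congrArg (fun μ : Measure ℝ => μ Set.univ) hmap
    simp [measure_univ] at this
  -- measure chain
  have hchain : P {ω | σ * |Polynomial.aeval (η ω) (Polynomial.hermite (j+1))| > u}
      ≥ ENNReal.ofReal (s * ((Real.sqrt (2 * Real.pi))⁻¹ * Real.exp (-(t+s)^2/2))) := by
    calc ENNReal.ofReal (s * ((Real.sqrt (2 * Real.pi))⁻¹ * Real.exp (-(t+s)^2/2)))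
        ≤ gaussianReal 0 1 (Set.Icc t (t+s)) := gaussian_icc_lower t s ht0.le hs0
      _ = Measure.map η P (Set.Icc t (t+s)) := by rw [hmap]
      _ = P (η ⁻¹' (Set.Icc t (t+s))) := Measure.map_apply_of_aemeasurable hηm measurableSet_Icc
      _ ≤ P {ω | σ * |Polynomial.aeval (η ω) (Polynomial.hermite (j+1))| > u} :=
          measure_mono hincl
  refine le_trans ?_ hchain
  apply ENNReal.ofReal_le_ofReal
  -- real inequality
  rw [← hv, hv2]
  have hexp : Real.exp (-(1/2) * v^2) = Real.exp (-v^2/2) := by ring_nf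
  -- bound (t+s)^2
  obtain ⟨d, hd⟩ : ∃ d : ℝ, d = a / v' + 1 / (v' + 1) := ⟨_, rfl⟩
  have hts : t + s = v' + d := by rw [htdef, hsdef, hd]; ring
  have hd0 : 0 ≤ d := by rw [hd]; positivity
  have hdr : d ≤ a/m + 1 := by
    rw [hd]
    have h1 : a / v' ≤ a / m := div_le_div_of_nonneg_left ha0.le hm0 hv'm
    have h2 : 1 / (v' + 1) ≤ 1 := by
      rw [div_le_one (by positivity)]; linarith
    linarith
  have hv'd : v' * d ≤ a + 1 := by
    rw [hd, mul_add, mul_div_cancel₀ _ (ne_of_gt hv'0)]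
    have : v' * (1 / (v' + 1)) ≤ 1 := by
      rw [mul_one_div, div_le_one (by positivity)]; linarith
    linarith
  have hts2 : (t+s)^2 ≤ v'^2 + (2*(a+1) + (a/m+1)^2) := by
    rw [hts]
    nlinarith [hd0, hdr, hv'd, sq_nonneg d]
  have hexp2 : K * Real.exp (-v'^2/2) ≤ (Real.sqrt (2 * Real.pi))⁻¹ * Real.exp (-(t+s)^2/2) := by
    rw [hK, mul_assoc, ← Real.exp_add]
    apply mul_le_mul_of_nonneg_left _ (inv_nonneg.mpr (Real.sqrt_nonneg _))
    apply Real.exp_le_exp.mpr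
    linarith
  have hsK : (1/(v'+1)) * (K * Real.exp (-v'^2/2))
      ≤ s * ((Real.sqrt (2 * Real.pi))⁻¹ * Real.exp (-(t+s)^2/2)) := by
    calc (1/(v'+1)) * (K * Real.exp (-v'^2/2))
        ≤ (1/(v'+1)) * ((Real.sqrt (2 * Real.pi))⁻¹ * Real.exp (-(t+s)^2/2)) :=
          mul_le_mul_of_nonneg_left hexp2 (by positivity)
      _ = s * ((Real.sqrt (2 * Real.pi))⁻¹ * Real.exp (-(t+s)^2/2)) := by rw [hsdef]
  refine le_trans ?_ hsK
  rw [hexp]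
  -- case split on v vs m
  rcases le_or_gt m v with hcase | hcase
  · -- v' = v
    have hveq : v' = v := by rw [hv', max_eq_left hcase]
    rw [hveq]
    rw [div_eq_mul_inv, ← one_div]
    have hCle : (1/(m+1)) * K * Real.exp (-m^2/2) ≤ K := by
      have h1 : (1:ℝ)/(m+1) ≤ 1 := by rw [div_le_one (by positivity)]; linarith
      have h2 : Real.exp (-m^2/2) ≤ 1 := Real.exp_le_one_iff.mpr (by nlinarith)
      have p0 : (0:ℝ) ≤ 1/(m+1)*K := by positivity
      calc (1/(m+1)) * K * Real.exp (-m^2/2) ≤ (1/(m+1))*K := mul_le_of_le_one_right p0 h2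
        _ ≤ 1 * K := mul_le_mul_of_nonneg_right h1 hK0.le
        _ = K := one_mul K
    calc (1/(m+1)) * K * Real.exp (-m^2/2) * (1/(v+1)) * Real.exp (-v^2/2)
        ≤ K * (1/(v+1)) * Real.exp (-v^2/2) := by
          apply mul_le_mul_of_nonneg_right _ (Real.exp_nonneg _)
          exact mul_le_mul_of_nonneg_right hCle (by positivity)
      _ = (1/(v+1)) * (K * Real.exp (-v^2/2)) := by ring
  · -- v' = m
    have hveq : v' = m := by rw [hv', max_eq_right hcase.le]
    rw [hveq]
    have h1 : (1:ℝ)/(v+1) ≤ 1 := by rw [div_le_one (by positivity)]; linarith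
    have h2 : Real.exp (-v^2/2) ≤ 1 := Real.exp_le_one_iff.mpr (by nlinarith)
    have hC0 : 0 < (1/(m+1)) * K * Real.exp (-m^2/2) := by positivity
    calc (1/(m+1)) * K * Real.exp (-m^2/2) / (v+1) * Real.exp (-v^2/2)
        ≤ (1/(m+1)) * K * Real.exp (-m^2/2) * 1 * 1 := by
          rw [div_eq_mul_inv, ← one_div]
          apply mul_le_mul (by nlinarith) h2 (Real.exp_nonneg _) (by nlinarith)
      _ = (1/(m+1)) * (K * Real.exp (-m^2/2)) := by ring
end
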